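/- arXiv:1105.2944 — 2 statements merged into one kernel-verified Lean document; each statement's English description precedes it below -/
import Mathlib

section
/- Let λ be an infinite cardinal and let T be the tree constructed level by level as a subtree of (^{<λ⁺}2, ⊆) with the homogeneity property that for every level α, every t in level T_α, and every s ∈ T of height < α, the sequence s*t (which begins as s and continues as t) is also in T_α. Then T is homogenous: for all s₀, s₁ ∈ T of the same height, the subtrees T^{s₀} := {t : s₀⌢t ∈ T} and T^{s₁} := {t : s₁⌢t ∈ T} are equal. -/
open Ordinal Set

noncomputable section

/-- The set of accumulation points of `C` that belong to `C`. -/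
def acc (C : Set Ordinal) : Set Ordinal :=
  {β | β ∈ C ∧ ∀ γ < β, ∃ δ ∈ C, γ < δ ∧ δ < β}

/-- Non-accumulation points of `C`. -/
def nacc (C : Set Ordinal) : Set Ordinal := C \ acc C

/-- `X ∩ α` is cofinal in `α`. -/
def CofinalIn (X : Set Ordinal) (α : Ordinal) : Prop :=
  ∀ γ < α, ∃ δ ∈ X, γ < δ ∧ δ < α

/-- Accumulation points of `C` (not necessarily members of `C`). -/
def accPlus (C : Set Ordinal) : Set Ordinal :=
  {β | (∃ δ ∈ C, δ < β) ∧ ∀ γ < β, ∃ δ ∈ C, γ < δ ∧ δ < β}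

def IsClosedSet (C : Set Ordinal) : Prop := accPlus C ⊆ C

/-- `C` is a club (closed and unbounded) subset of `α`. -/
def IsClubIn (C : Set Ordinal) (α : Ordinal) : Prop :=
  C ⊆ Set.Iio α ∧ CofinalIn C α ∧ ∀ β < α, β ∈ accPlus C → β ∈ C

/-- The `i`-th element of the set of ordinals `C` (the inverse collapse of `C`). -/
def nth (C : Set Ordinal) (i : Ordinal) : Ordinal :=
  sInf (C \ Set.range (fun j : Set.Iio i => nth C j.1))
termination_by i
decreasing_by exact j.2

/-- The order type of a set of ordinals: the least `i` such that the first `i`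
elements of `C` exhaust `C`. -/
def otp (C : Set Ordinal) : Ordinal :=
  sInf {i | C ⊆ Set.range (fun j : Set.Iio i => nth C j.1)}

/-- The image of `E` under the order isomorphism (inverse collapse) `π_C : otp(C) → C`. -/
def collapseImage (C E : Set Ordinal) : Set Ordinal :=
  {β | β ∈ C ∧ otp (C ∩ Set.Iio β) ∈ E}

def IsStationaryIn (S : Set Ordinal) (α : Ordinal) : Prop :=
  ∀ D, IsClubIn D α → (S ∩ D).Nonempty

/-- A `□_λ`-sequence. -/
def IsSquareSeq (lam : Cardinal) (C : Ordinal → Set Ordinal) : Prop :=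
  ∀ α < (Order.succ lam).ord, Order.IsSuccLimit α →
    IsClubIn (C α) α ∧ otp (C α) ≤ lam.ord ∧
    ∀ β ∈ acc (C α), C β = C α ∩ Set.Iio β

/-- An Ostaszewski square (`⊠_λ`) sequence. -/
def IsOstSeq (lam : Cardinal) (C : Ordinal → Set Ordinal) : Prop :=
  IsSquareSeq lam C ∧
  ∀ A : Ordinal → Set Ordinal,
    (∀ i < lam.ord, CofinalIn (A i) (Order.succ lam).ord) →
    ∀ θ < lam.ord, Order.IsSuccLimit θ →
    ∀ D, IsClubIn D (Order.succ lam).ord →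
    ∃ α < (Order.succ lam).ord, otp (C α) = θ ∧
      ∀ i < θ, nth (C α) (i + 1) ∈ A i ∧
        ∃ β ∈ D, nth (C α) i < β ∧ β < nth (C α) (i + 1)

/-- `s*t`: the sequence that begins as `s` (up to `δ`) and continues as `t` (up to `α`). -/
def starSeq (s : Ordinal → Bool) (δ : Ordinal) (t : Ordinal → Bool) (α : Ordinal) :
    Ordinal → Bool :=
  fun β => if β < δ then s β else if β < α then t β else false

/-- `s⌢t`: the concatenation of `s` (of length `h`) with `t` (of length `l`). -/
def concatSeq (s : Ordinal → Bool) (h : Ordinal) (t : Ordinal → Bool) (l : Ordinal) :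
    Ordinal → Bool :=
  fun β => if β < h then s β else if β < h + l then t (β - h) else false

theorem stmt15 (lam : Cardinal) (hinf : Cardinal.aleph0 ≤ lam)
    (T : Ordinal → Set (Ordinal → Bool))
    (hnorm : ∀ α < (Order.succ lam).ord, ∀ t ∈ T α, ∀ β, α ≤ β → t β = false)
    (hstar : ∀ α < (Order.succ lam).ord, ∀ t ∈ T α, ∀ δ < α, ∀ s ∈ T δ,
      starSeq s δ t α ∈ T α) :
    ∀ h < (Order.succ lam).ord, ∀ s₀ ∈ T h, ∀ s₁ ∈ T h,
      ∀ l, h + l < (Order.succ lam).ord → ∀ t : Ordinal → Bool,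
        (concatSeq s₀ h t l ∈ T (h + l) ↔ concatSeq s₁ h t l ∈ T (h + l)) := by
  intro h hh s₀ hs₀ s₁ hs₁ l hl t
  have key : ∀ s' s : Ordinal → Bool,
      starSeq s h (concatSeq s' h t l) (h + l) = concatSeq s h t l := by
    intro s' s
    funext β
    simp only [starSeq, concatSeq]
    by_cases h1 : β < h
    · simp [h1]
    · by_cases h2 : β < h + l <;> simp [h1, h2]
  rcases eq_or_ne l 0 with rfl | hl0
  · have e : ∀ s : Ordinal → Bool, s ∈ T h → concatSeq s h t 0 = s := by
      intro s hs
      funext β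
      simp only [concatSeq, add_zero]
      by_cases h1 : β < h
      · simp [h1]
      · simp [h1, hnorm h hh s hs β (le_of_not_gt h1)]
    rw [add_zero, e s₀ hs₀, e s₁ hs₁]
    exact iff_of_true hs₀ hs₁
  · have hlt : h < h + l := by
      have := (add_lt_add_iff_left h).2 (pos_iff_ne_zero.2 hl0)
      simpa using this
    constructor
    · intro hm
      have := hstar (h + l) hl _ hm h hlt s₁ hs₁
      rwa [key s₀ s₁] at this
    · intro hm
      have := hstar (h + l) hl _ hm h hlt s₀ hs₀
      rwa [key s₁ s₀] at this

end
end

section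
/- Let λ be an uncountable cardinal and suppose T_i ⊆ λ⁺ (for i < μ, μ ≤ λ) are sets such that every α ∈ T_i satisfies otp(C_α) = γ_{i+1}, where ⟨γ_i⟩ is strictly increasing, and such that for α ∈ T_i the clubs C'_α ⊆ C_α satisfy: min of the set of order-type indices used by C'_α exceeds γ_i (precisely, C'_α = π_{C_α}''E where min(E) > γ_i). Define S_i := ∪{acc(C*_α) ∪ {α} : α ∈ T_i} where C*_α ⊆ C'_α are coherent clubs. Then for all i < j < μ, S_i ∩ S_j = ∅; moreover, for every limit α < λ⁺, the set {i : (acc(C*_α) ∪ {α}) ∩ S_i ≠ ∅} has at most one element. -/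
open Ordinal Set

noncomputable section

/-- `S_i := ⋃ {acc(C*_α) ∪ {α} : α ∈ T_i}`. -/
def Sunion (Cstar : Ordinal → Set Ordinal) (T : Set Ordinal) : Set Ordinal :=
  ⋃ α ∈ T, (acc (Cstar α) ∪ {α})


section SquareAux

universe u

/-- Initial segment of the enumeration of `C`. -/
def Nset (C : Set Ordinal.{u}) (i : Ordinal.{u}) : Set Ordinal.{u} :=
  Set.range (fun j : Set.Iio i => nth C j.1)

theorem nth_def (C : Set Ordinal.{u}) (i : Ordinal.{u}) :
    nth C i = sInf (C \ Nset C i) := by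
  rw [nth]; rfl

theorem mem_Nset {C : Set Ordinal.{u}} {i c : Ordinal.{u}} :
    c ∈ Nset C i ↔ ∃ j < i, nth C j = c := by
  constructor
  · rintro ⟨⟨j, hj⟩, rfl⟩; exact ⟨j, hj, rfl⟩
  · rintro ⟨j, hj, rfl⟩; exact ⟨⟨j, hj⟩, rfl⟩

theorem Nset_mono {C : Set Ordinal.{u}} {i j : Ordinal.{u}} (h : i ≤ j) :
    Nset C i ⊆ Nset C j := by
  intro c hc; rw [mem_Nset] at *
  obtain ⟨k, hk, hkc⟩ := hc; exact ⟨k, lt_of_lt_of_le hk h, hkc⟩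

theorem nth_mem {C : Set Ordinal.{u}} {i : Ordinal.{u}} (h : (C \ Nset C i).Nonempty) :
    nth C i ∈ C \ Nset C i := by
  rw [nth_def]; exact csInf_mem h

theorem nth_le {C : Set Ordinal.{u}} {i c : Ordinal.{u}} (h : c ∈ C \ Nset C i) :
    nth C i ≤ c := by
  rw [nth_def]; exact csInf_le' h

theorem nth_strictMono {C : Set Ordinal.{u}} {i j : Ordinal.{u}} (hij : i < j)
    (h : (C \ Nset C j).Nonempty) : nth C i < nth C j := by
  have hj := nth_mem h
  have hji : nth C j ∈ C \ Nset C i := ⟨hj.1, fun hc => hj.2 (Nset_mono hij.le hc)⟩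
  have h1 : nth C i ≤ nth C j := nth_le hji
  have h2 : nth C i ≠ nth C j := by
    intro he; exact hj.2 (mem_Nset.2 ⟨i, hij, he⟩)
  exact h1.lt_of_ne h2

theorem nonempty_of_le {C : Set Ordinal.{u}} {i j : Ordinal.{u}} (hij : i ≤ j)
    (h : (C \ Nset C j).Nonempty) : (C \ Nset C i).Nonempty := by
  obtain ⟨c, hc⟩ := h
  exact ⟨c, hc.1, fun hc2 => hc.2 (Nset_mono hij hc2)⟩

theorem self_le_nth' {C : Set Ordinal.{u}} :
    ∀ i : Ordinal.{u}, (C \ Nset C i).Nonempty → i ≤ nth C i := by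
  intro i
  induction i using Ordinal.induction with
  | h i IH =>
    intro h
    by_contra hlt
    push_neg at hlt
    have key : ∀ j < i, j < nth C i := fun j hj =>
      lt_of_le_of_lt (IH j hj (nonempty_of_le hj.le h)) (nth_strictMono hj h)
    exact absurd (key _ hlt) (lt_irrefl _)

theorem exists_nth_eq {C : Set Ordinal.{u}} {c : Ordinal.{u}} (hc : c ∈ C) :
    ∃ j : Ordinal.{u}, nth C j = c ∧ c ∉ Nset C j := by
  have hne : {j : Ordinal.{u} | nth C j = c}.Nonempty := by
    by_contra hemp
    rw [Set.not_nonempty_iff_eq_empty] at hemp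
    have hnot : ∀ j : Ordinal.{u}, nth C j ≠ c := by
      intro j hj
      have : j ∈ {j : Ordinal.{u} | nth C j = c} := hj
      rw [hemp] at this
      exact this
    have hcn : c ∈ C \ Nset C c := ⟨hc, fun hm => by
      obtain ⟨j, _, hj⟩ := mem_Nset.1 hm; exact hnot j hj⟩
    have h1 : c ≤ nth C c := self_le_nth' c ⟨c, hcn⟩
    have h2 : nth C c ≤ c := nth_le hcn
    exact hnot c (le_antisymm h2 h1)
  have hmem := csInf_mem hne
  rw [Set.mem_setOf_eq] at hmem
  refine ⟨sInf {j : Ordinal.{u} | nth C j = c}, hmem, ?_⟩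
  intro hm
  obtain ⟨j, hj, hjc⟩ := mem_Nset.1 hm
  have : sInf {j : Ordinal.{u} | nth C j = c} ≤ j :=
    csInf_le' (show j ∈ {j : Ordinal.{u} | nth C j = c} from hjc)
  exact absurd hj (not_lt.2 this)

theorem nth_sub_mem {A B : Set Ordinal.{u}} (hAB : A ⊆ B) :
    ∀ i : Ordinal.{u}, (A \ Nset A i).Nonempty → nth A i ∈ B \ Nset B i := by
  intro i
  induction i using Ordinal.induction with
  | h i IH =>
    intro h
    have ha := nth_mem h
    refine ⟨hAB ha.1, ?_⟩
    intro hm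
    obtain ⟨j, hj, hjb⟩ := mem_Nset.1 hm
    have hAj : (A \ Nset A j).Nonempty := nonempty_of_le hj.le h
    have h1 : nth B j ≤ nth A j := nth_le (IH j hj hAj)
    have h2 : nth A j < nth A i := nth_strictMono hj h
    rw [hjb] at h1
    exact absurd (h1.trans_lt h2) (lt_irrefl _)

theorem otp_le_of_subset_Nset {C : Set Ordinal.{u}} {i : Ordinal.{u}}
    (h : C ⊆ Nset C i) : otp.{u,u} C ≤ i :=
  csInf_le' (show i ∈ {i : Ordinal.{u} | C ⊆ Set.range (fun j : Set.Iio i => nth C j.1)} from h)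

theorem subset_Nset_otp {C : Set Ordinal.{u}} (hB : BddAbove C) :
    C ⊆ Nset C (otp.{u,u} C) := by
  obtain ⟨b, hb⟩ := hB
  have hne : {i : Ordinal.{u} | C ⊆ Nset C i}.Nonempty := by
    refine ⟨b + 1, fun c hc => ?_⟩
    obtain ⟨j, hj, hjn⟩ := exists_nth_eq hc
    have hcb : c ≤ b := hb hc
    have hjc : j ≤ c := by
      have : j ≤ nth C j := self_le_nth' j ⟨c, hc, hjn⟩
      rw [hj] at this; exact this
    exact mem_Nset.2 ⟨j, lt_of_le_of_lt (hjc.trans hcb) (lt_add_one b), hj⟩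
  exact csInf_mem hne

theorem otp_mono {A B : Set Ordinal.{u}} (hAB : A ⊆ B) (hB : BddAbove B) :
    otp.{u,u} A ≤ otp.{u,u} B := by
  refine otp_le_of_subset_Nset (fun a ha => ?_)
  obtain ⟨j, hja, hjn⟩ := exists_nth_eq ha
  have hAj : (A \ Nset A j).Nonempty := ⟨a, ha, hjn⟩
  have hmem := nth_sub_mem hAB j hAj
  have hjlt : j < otp.{u,u} B := by
    by_contra hle
    push_neg at hle
    exact hmem.2 (Nset_mono hle (subset_Nset_otp hB hmem.1))
  exact mem_Nset.2 ⟨j, hjlt, hja⟩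

theorem acc_inter_Iio {X : Set Ordinal} {w x : Ordinal} (hx : x ∈ acc X) (hxw : x < w) :
    x ∈ acc (X ∩ Set.Iio w) := by
  refine ⟨⟨hx.1, hxw⟩, fun γ hγ => ?_⟩
  obtain ⟨δ, hδ, h1, h2⟩ := hx.2 γ hγ
  exact ⟨δ, ⟨hδ, h2.trans hxw⟩, h1, h2⟩

theorem acc_inter_subset {X Y : Set Ordinal} : acc (X ∩ Y) ⊆ acc X := by
  rintro x ⟨⟨h1, _⟩, h2⟩
  exact ⟨h1, fun γ hγ => by obtain ⟨δ, hδ, ha, hb⟩ := h2 γ hγ; exact ⟨δ, hδ.1, ha, hb⟩⟩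

theorem mem_Sunion {Cstar : Ordinal → Set Ordinal} {T : Set Ordinal} {z : Ordinal} :
    z ∈ Sunion Cstar T ↔ ∃ a ∈ T, z ∈ acc (Cstar a) ∪ {a} := by
  simp [Sunion]

end SquareAux

theorem stmt18 (lam : Cardinal) (hunc : Cardinal.aleph0 < lam)
    (μ : Ordinal) (hμ : μ ≤ lam.ord)
    (C : Ordinal → Set Ordinal) (hC : IsSquareSeq lam C)
    (γ : Ordinal → Ordinal) (hγ : StrictMonoOn γ (Set.Iic μ))
    (lamf : Ordinal → Cardinal)
    (hlamf : ∀ i < μ, γ i < (lamf i).ord ∧ (lamf i).ord ≤ γ (i + 1))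
    (T : Ordinal → Set Ordinal)
    (hT : ∀ i < μ, ∀ α ∈ T i, α < (Order.succ lam).ord ∧ Order.IsSuccLimit α ∧
      α.cof = lamf i ∧ otp (C α) = γ (i + 1))
    (C' : Ordinal → Set Ordinal)
    (hC' : ∀ i < μ, ∀ α ∈ T i, C' α ⊆ C α ∧
      ∀ x ∈ C' α, γ i < otp (C α ∩ Set.Iio x))
    (Cstar : Ordinal → Set Ordinal)
    (hCstar : ∀ i < μ, ∀ α ∈ T i, Cstar α ⊆ C' α ∧ IsClubIn (Cstar α) α)
    (hacc : ∀ i < μ, ∀ α ∈ T i,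
      acc (Cstar α) ⊆ acc (C' α) ∧ acc (C' α) ⊆ acc (C α))
    (hcoh : ∀ α β : Ordinal, β ∈ acc (Cstar α) → Cstar β = Cstar α ∩ Set.Iio β) :
    (∀ i j, i < j → j < μ → Sunion Cstar (T i) ∩ Sunion Cstar (T j) = ∅) ∧
    ∀ α < (Order.succ lam).ord, Order.IsSuccLimit α → ∀ i < μ, ∀ j < μ,
      ((acc (Cstar α) ∪ {α}) ∩ Sunion Cstar (T i)).Nonempty →
      ((acc (Cstar α) ∪ {α}) ∩ Sunion Cstar (T j)).Nonempty → i = j := by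
  have hsuccle : ∀ i : Ordinal, i < μ → i + 1 ≤ μ := by
    intro i hi
    rw [Ordinal.add_one_eq_succ]
    exact Order.succ_le_of_lt hi
  have hlt1 : ∀ i : Ordinal, i < i + 1 := by
    intro i
    rw [Ordinal.add_one_eq_succ]
    exact Order.lt_succ i
  have L1 : ∀ i < μ, ∀ z ∈ Sunion Cstar (T i),
      γ i < otp (C z) ∧ otp (C z) ≤ γ (i + 1) := by
    intro i hi z hz
    obtain ⟨a, ha, hz⟩ := mem_Sunion.1 hz
    obtain ⟨halt, halim, -, hotp⟩ := hT i hi a ha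
    have hgam : γ i < γ (i + 1) :=
      hγ (Set.mem_Iic.2 hi.le) (Set.mem_Iic.2 (hsuccle i hi)) (hlt1 i)
    rcases hz with hz | hz
    · have h1 : z ∈ acc (C' a) := (hacc i hi a ha).1 hz
      have h2 : z ∈ acc (C a) := (hacc i hi a ha).2 h1
      obtain ⟨hclub, -, hcohC⟩ := hC a halt halim
      have hCz : C z = C a ∩ Set.Iio z := hcohC z h2
      have hlow : γ i < otp (C a ∩ Set.Iio z) := (hC' i hi a ha).2 z h1.1
      have hbdd : BddAbove (C a) := ⟨a, fun x hx => le_of_lt (hclub.1 hx)⟩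
      have hup : otp (C a ∩ Set.Iio z) ≤ otp (C a) :=
        otp_mono Set.inter_subset_left hbdd
      rw [hCz]
      exact ⟨hlow, hotp ▸ hup⟩
    · rw [Set.mem_singleton_iff] at hz
      subst hz
      exact ⟨hotp ▸ hgam, le_of_eq hotp⟩
  have L2 : ∀ i j : Ordinal, i < j → j < μ → ∀ z,
      z ∈ Sunion Cstar (T i) → z ∈ Sunion Cstar (T j) → False := by
    intro i j hij hj z hzi hzj
    have hi : i < μ := hij.trans hj
    have h1 := (L1 i hi z hzi).2
    have h2 := (L1 j hj z hzj).1
    have h3 : γ (i + 1) ≤ γ j := by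
      rcases eq_or_lt_of_le (show i + 1 ≤ j by
        rw [Ordinal.add_one_eq_succ]; exact Order.succ_le_of_lt hij) with he | hl
      · exact le_of_eq (by rw [he])
      · exact le_of_lt (hγ (Set.mem_Iic.2 (hsuccle i hi)) (Set.mem_Iic.2 hj.le) hl)
    exact absurd ((h2.trans_le h1).trans_le h3) (lt_irrefl _)
  have L3 : ∀ j < μ, ∀ w, w ∈ Sunion Cstar (T j) →
      ∀ z ∈ acc (Cstar w) ∪ {w}, z ∈ Sunion Cstar (T j) := by
    intro j hj w hw z hz
    rcases hz with hz | hz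
    · obtain ⟨a, ha, hwa⟩ := mem_Sunion.1 hw
      rcases hwa with hwa | hwa
      · rw [hcoh a w hwa] at hz
        exact mem_Sunion.2 ⟨a, ha, Or.inl (acc_inter_subset hz)⟩
      · rw [Set.mem_singleton_iff] at hwa
        subst hwa
        exact mem_Sunion.2 ⟨w, ha, Or.inl hz⟩
    · rw [Set.mem_singleton_iff] at hz
      subst hz
      exact hw
  constructor
  · intro i j hij hj
    rw [Set.eq_empty_iff_forall_notMem]
    rintro z ⟨hzi, hzj⟩
    exact L2 i j hij hj z hzi hzj
  · intro α hα hlim i hi j hj hne1 hne2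
    obtain ⟨x, hx, hxi⟩ := hne1
    obtain ⟨y, hy, hyj⟩ := hne2
    have key : ∃ z, z ∈ Sunion Cstar (T i) ∧ z ∈ Sunion Cstar (T j) := by
      rcases hx with hx | hx
      · rcases hy with hy | hy
        · rcases lt_trichotomy x y with h | h | h
          · have hxy : x ∈ acc (Cstar y) := by
              rw [hcoh α y hy]
              exact acc_inter_Iio hx h
            exact ⟨x, hxi, L3 j hj y hyj x (Or.inl hxy)⟩
          · exact ⟨x, hxi, h ▸ hyj⟩
          · have hyx : y ∈ acc (Cstar x) := by
              rw [hcoh α x hx]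
              exact acc_inter_Iio hy h
            exact ⟨y, L3 i hi x hxi y (Or.inl hyx), hyj⟩
        · rw [Set.mem_singleton_iff] at hy
          subst hy
          exact ⟨x, hxi, L3 j hj y hyj x (Or.inl hx)⟩
      · rw [Set.mem_singleton_iff] at hx
        subst hx
        exact ⟨y, L3 i hi x hxi y hy, hyj⟩
    obtain ⟨z, hzi, hzj⟩ := key
    by_contra hne
    rcases Ne.lt_or_gt hne with h | h
    · exact L2 i j h hj z hzi hzj
    · exact L2 j i h hi z hzj hzi

end
end
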